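/- arXiv:1712.05753 — 2 statements merged into one kernel-verified Lean document; each statement's English description precedes it below -/
import Mathlib

section
/- Let U, V : ℝ³ → ℂ be measurable functions whose Fourier transforms satisfy |Û(ξ)| ≤ M_U e^{−|ξ|} |ξ|^{−2} and |V̂(ξ)| ≤ M_V e^{−|ξ|} |ξ|^{−2} for all ξ ≠ 0. Then there is an absolute constant c > 0 such that for all ξ ≠ 0, |(Û ∗ V̂)(ξ)| ≤ c · M_U · M_V · e^{−|ξ|} / |ξ|. -/
open MeasureTheory

section Aux
open Metric Set ENNReal

local notation "E3" => EuclideanSpace ℝ (Fin 3)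

private lemma polar3 (f : ℝ → ℝ≥0∞) (hf : Measurable f) :
    ∫⁻ x : E3, f ‖x‖ = 3 * volume (ball (0:E3) 1) *
      ∫⁻ y in Ioi (0:ℝ), ENNReal.ofReal (y ^ 2) * f y := by
  have hdim : Module.finrank ℝ E3 = 3 := by simp
  have hν : Measure.volumeIoiPow (Module.finrank ℝ E3 - 1) = Measure.volumeIoiPow 2 := by
    rw [hdim]
  have h4 : ∫⁻ y : Ioi (0:ℝ), f y ∂(Measure.volumeIoiPow 2) =
      ∫⁻ y in Ioi (0:ℝ), ENNReal.ofReal (y ^ 2) * f y := by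
    have hg : Measurable (fun r : Ioi (0:ℝ) => ENNReal.ofReal ((r:ℝ) ^ 2)) :=
      ENNReal.measurable_ofReal.comp (measurable_subtype_coe.pow_const 2)
    calc ∫⁻ y : Ioi (0:ℝ), f y ∂(Measure.volumeIoiPow 2)
        = ∫⁻ y : Ioi (0:ℝ),
            ((fun r : Ioi (0:ℝ) => ENNReal.ofReal ((r:ℝ) ^ 2)) * fun y : Ioi (0:ℝ) => f y) y
            ∂(Measure.comap Subtype.val volume) :=
          lintegral_withDensity_eq_lintegral_mul _ hg (hf.comp measurable_subtype_coe)
      _ = ∫⁻ y in Ioi (0:ℝ), ENNReal.ofReal (y ^ 2) * f y :=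
          lintegral_subtype_comap measurableSet_Ioi (fun y => ENNReal.ofReal (y ^ 2) * f y)
  calc ∫⁻ x : E3, f ‖x‖ = ∫⁻ x in ({(0:E3)}ᶜ), f ‖x‖ := by rw [restrict_compl_singleton]
    _ = ∫⁻ x : ({(0:E3)}ᶜ : Set E3), f ‖(x : E3)‖ ∂(volume.comap Subtype.val) :=
        (lintegral_subtype_comap (measurableSet_singleton _).compl (fun v => f ‖v‖)).symm
    _ = ∫⁻ z : sphere (0:E3) 1 × Ioi (0:ℝ), f z.2
          ∂((volume : Measure E3).toSphere.prod
            (Measure.volumeIoiPow (Module.finrank ℝ E3 - 1))) :=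
        by
          rw [← (Measure.measurePreserving_homeomorphUnitSphereProd
            (volume : Measure E3)).lintegral_comp_emb
            (Homeomorph.measurableEmbedding _) (fun z => f z.2)]
          simp only [homeomorphUnitSphereProd_apply_snd_coe]
    _ = ∫⁻ z : sphere (0:E3) 1 × Ioi (0:ℝ), f z.2
          ∂((volume : Measure E3).toSphere.prod (Measure.volumeIoiPow 2)) := by rw [hν]
    _ = ∫⁻ _ : sphere (0:E3) 1, (∫⁻ y : Ioi (0:ℝ), f y ∂(Measure.volumeIoiPow 2))
          ∂(volume : Measure E3).toSphere :=
        lintegral_prod _ (((hf.comp measurable_subtype_coe).comp measurable_snd).aemeasurable)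
    _ = (volume : Measure E3).toSphere univ *
          ∫⁻ y : Ioi (0:ℝ), f y ∂(Measure.volumeIoiPow 2) := by
        rw [lintegral_const]; ring
    _ = 3 * volume (ball (0:E3) 1) * ∫⁻ y in Ioi (0:ℝ), ENNReal.ofReal (y ^ 2) * f y := by
        rw [h4, Measure.toSphere_apply_univ, hdim]; push_cast; ring

private lemma lint_ball (R : ℝ) (hR : 0 < R) :
    ∫⁻ η : E3, (if ‖η‖ < R then ENNReal.ofReal (‖η‖ ^ (-2:ℝ)) else 0) =
      3 * volume (ball (0:E3) 1) * ENNReal.ofReal R := by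
  set f : ℝ → ℝ≥0∞ := fun y => if y < R then ENNReal.ofReal (y ^ (-2:ℝ)) else 0 with hfdef
  have hf : Measurable f := by
    apply Measurable.ite measurableSet_Iio
    · fun_prop
    · exact measurable_const
  have := polar3 f hf
  rw [show (fun x : E3 => f ‖x‖) = fun η : E3 =>
      (if ‖η‖ < R then ENNReal.ofReal (‖η‖ ^ (-2:ℝ)) else 0) from rfl] at this
  rw [this]
  congr 1
  have : ∀ y ∈ Ioi (0:ℝ), ENNReal.ofReal (y ^ 2) * f y = (Iio R).indicator (fun _ => 1) y := by
    intro y hy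
    simp only [hfdef, indicator, mem_Iio]
    split_ifs with h
    · rw [← ENNReal.ofReal_mul (by positivity)]
      rw [show y ^ 2 * y ^ (-2:ℝ) = 1 by
        rw [← Real.rpow_natCast y 2, ← Real.rpow_add hy]; norm_num]
      simp
    · simp
  rw [setLIntegral_congr_fun measurableSet_Ioi this,
    lintegral_indicator measurableSet_Iio]
  simp only [Measure.restrict_restrict measurableSet_Iio, lintegral_one, Measure.restrict_apply
    MeasurableSet.univ, univ_inter]
  rw [show Iio R ∩ Ioi (0:ℝ) = Ioo 0 R by ext x; simp [mem_Ioo, and_comm]]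
  rw [Real.volume_Ioo, sub_zero]

private lemma lint_compl (R : ℝ) (hR : 0 < R) :
    ∫⁻ η : E3, (if R ≤ ‖η‖ then ENNReal.ofReal (‖η‖ ^ (-4:ℝ)) else 0) =
      3 * volume (ball (0:E3) 1) * ENNReal.ofReal R⁻¹ := by
  set f : ℝ → ℝ≥0∞ := fun y => if R ≤ y then ENNReal.ofReal (y ^ (-4:ℝ)) else 0 with hfdef
  have hf : Measurable f := by
    apply Measurable.ite measurableSet_Ici
    · fun_prop
    · exact measurable_const
  rw [show (fun η : E3 => (if R ≤ ‖η‖ then ENNReal.ofReal (‖η‖ ^ (-4:ℝ)) else 0)) =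
      fun x : E3 => f ‖x‖ from rfl, polar3 f hf]
  congr 1
  have h1 : ∀ y ∈ Ioi (0:ℝ), ENNReal.ofReal (y ^ 2) * f y =
      (Ici R).indicator (fun y => ENNReal.ofReal (y ^ (-2:ℝ))) y := by
    intro y hy
    simp only [hfdef, indicator, mem_Ici]
    split_ifs with h
    · rw [← ENNReal.ofReal_mul (by positivity)]
      congr 1
      rw [← Real.rpow_natCast y 2, ← Real.rpow_add hy]; norm_num
    · simp
  rw [setLIntegral_congr_fun measurableSet_Ioi h1,
    lintegral_indicator measurableSet_Ici]
  rw [Measure.restrict_restrict measurableSet_Ici,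
    show Ici R ∩ Ioi (0:ℝ) = Ici R by rw [inter_eq_left]; exact fun x hx => lt_of_lt_of_le hR hx]
  rw [← ofReal_integral_eq_lintegral_ofReal]
  · rw [show ∫ y in Ici R, y ^ (-2:ℝ) = ∫ y in Ioi R, y ^ (-2:ℝ) from
      integral_Ici_eq_integral_Ioi, integral_Ioi_rpow_of_lt (by norm_num) hR]
    norm_num
    rw [Real.rpow_neg_one]
  · exact (integrableOn_Ioi_rpow_of_lt (by norm_num) hR).congr_set_ae Ioi_ae_eq_Ici.symm
  · filter_upwards [ae_restrict_mem measurableSet_Ici] with y hy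
    exact Real.rpow_nonneg (le_trans hR.le hy) _


private lemma lint_G (ξ : E3) (hξ : ξ ≠ 0) :
    ∫⁻ η : E3, ENNReal.ofReal (‖ξ - η‖ ^ (-2:ℝ)) * ENNReal.ofReal (‖η‖ ^ (-2:ℝ)) ≤
      24 * volume (ball (0:E3) 1) * ENNReal.ofReal ‖ξ‖⁻¹ := by
  set vB := volume (ball (0:E3) 1) with hvB
  set r := ‖ξ‖ with hrdef
  have hr : 0 < r := norm_pos_iff.mpr hξ
  set s := r / 2 with hsdef
  have hs : 0 < s := by positivity
  set H1 : E3 → ℝ≥0∞ := fun η =>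
    ENNReal.ofReal (s ^ (-2:ℝ)) * (if ‖η‖ < s then ENNReal.ofReal (‖η‖ ^ (-2:ℝ)) else 0)
    with hH1def
  set H3 : E3 → ℝ≥0∞ := fun η =>
    (if s ≤ ‖η‖ then ENNReal.ofReal (‖η‖ ^ (-4:ℝ)) else 0) with hH3def
  have htrans : ∀ H : E3 → ℝ≥0∞, Measurable H → ∫⁻ η, H (ξ - η) = ∫⁻ η, H η := fun H hH =>
    (Measure.measurePreserving_sub_left volume ξ).lintegral_comp hH
  have hH1m : Measurable H1 := by
    apply Measurable.const_mul
    exact Measurable.ite (measurableSet_lt (by fun_prop) measurable_const) (by fun_prop)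
      measurable_const
  have hH3m : Measurable H3 :=
    Measurable.ite (measurableSet_le measurable_const (by fun_prop)) (by fun_prop) measurable_const
  -- pointwise bound
  have hpt : ∀ η : E3, ENNReal.ofReal (‖ξ - η‖ ^ (-2:ℝ)) * ENNReal.ofReal (‖η‖ ^ (-2:ℝ)) ≤
      H1 η + H1 (ξ - η) + (H3 η + H3 (ξ - η)) := by
    intro η
    rcases lt_or_ge ‖η‖ s with h1 | h1
    · -- ‖η‖ < s : use F1
      have hd : s ≤ ‖ξ - η‖ := by
        have := norm_sub_norm_le ξ η
        rw [← hrdef] at this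
        linarith [hsdef ▸ (by linarith : r - s = s)]
      have : ENNReal.ofReal (‖ξ - η‖ ^ (-2:ℝ)) ≤ ENNReal.ofReal (s ^ (-2:ℝ)) :=
        ENNReal.ofReal_le_ofReal (Real.rpow_le_rpow_of_nonpos hs hd (by norm_num))
      refine le_trans ?_ (le_add_right (le_add_right le_rfl))
      simp only [hH1def, if_pos h1]
      exact mul_le_mul_left this _
    rcases lt_or_ge ‖ξ - η‖ s with h2 | h2
    · -- ‖ξ-η‖ < s : use F2
      have hd : s ≤ ‖η‖ := h1
      refine le_trans ?_ (le_add_right (le_add_left le_rfl))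
      simp only [hH1def, if_pos h2]
      rw [mul_comm (ENNReal.ofReal (‖ξ - η‖ ^ (-2:ℝ)))]
      exact mul_le_mul_left (ENNReal.ofReal_le_ofReal
        (Real.rpow_le_rpow_of_nonpos hs hd (by norm_num))) _
    · -- both ≥ s : use F3
      refine le_trans ?_ (le_add_left le_rfl)
      simp only [hH3def, if_pos h1, if_pos h2]
      rw [← ENNReal.ofReal_mul (Real.rpow_nonneg (norm_nonneg _) _),
        ← ENNReal.ofReal_add (Real.rpow_nonneg (norm_nonneg _) _)
          (Real.rpow_nonneg (norm_nonneg _) _)]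
      apply ENNReal.ofReal_le_ofReal
      have ha : 0 < ‖ξ - η‖ := lt_of_lt_of_le hs h2
      have hb : 0 < ‖η‖ := lt_of_lt_of_le hs h1
      have e1 : ‖η‖ ^ (-4:ℝ) = ‖η‖ ^ (-2:ℝ) * ‖η‖ ^ (-2:ℝ) := by
        rw [← Real.rpow_add hb]; norm_num
      have e2 : ‖ξ - η‖ ^ (-4:ℝ) = ‖ξ - η‖ ^ (-2:ℝ) * ‖ξ - η‖ ^ (-2:ℝ) := by
        rw [← Real.rpow_add ha]; norm_num
      rw [e1, e2]
      nlinarith [sq_nonneg (‖ξ - η‖ ^ (-2:ℝ) - ‖η‖ ^ (-2:ℝ)),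
        mul_nonneg (Real.rpow_nonneg ha.le (-2:ℝ)) (Real.rpow_nonneg hb.le (-2:ℝ))]
  calc ∫⁻ η : E3, ENNReal.ofReal (‖ξ - η‖ ^ (-2:ℝ)) * ENNReal.ofReal (‖η‖ ^ (-2:ℝ))
      ≤ ∫⁻ η : E3, (H1 η + H1 (ξ - η) + (H3 η + H3 (ξ - η))) := lintegral_mono hpt
    _ = (∫⁻ η : E3, H1 η) + (∫⁻ η : E3, H1 (ξ - η)) +
          ((∫⁻ η : E3, H3 η) + (∫⁻ η : E3, H3 (ξ - η))) := by
        have m2 : Measurable (fun η : E3 => H1 (ξ - η)) :=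
          hH1m.comp (measurable_const.sub measurable_id)
        have m4 : Measurable (fun η : E3 => H3 (ξ - η)) :=
          hH3m.comp (measurable_const.sub measurable_id)
        rw [lintegral_add_right _ (show Measurable fun η => H3 η + H3 (ξ - η) from hH3m.add m4), lintegral_add_right _ m2,
          lintegral_add_right _ m4]
    _ = (∫⁻ η : E3, H1 η) + (∫⁻ η : E3, H1 η) + ((∫⁻ η : E3, H3 η) + (∫⁻ η : E3, H3 η)) := by
        rw [htrans H1 hH1m, htrans H3 hH3m]
    _ = 2 * (∫⁻ η : E3, H1 η) + 2 * (∫⁻ η : E3, H3 η) := by ring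
    _ = 2 * (ENNReal.ofReal (s ^ (-2:ℝ)) * (3 * vB * ENNReal.ofReal s)) +
          2 * (3 * vB * ENNReal.ofReal s⁻¹) := by
        rw [hH1def, hH3def]
        rw [lintegral_const_mul' _ _ ENNReal.ofReal_ne_top, lint_ball s hs, lint_compl s hs]
    _ = 24 * vB * ENNReal.ofReal r⁻¹ := by
        have e1 : ENNReal.ofReal (s ^ (-2:ℝ)) * ENNReal.ofReal s = ENNReal.ofReal s⁻¹ := by
          rw [← ENNReal.ofReal_mul (Real.rpow_nonneg hs.le _)]
          congr 1
          rw [show (s:ℝ) ^ (-2:ℝ) * s = s ^ (-2:ℝ) * s ^ (1:ℝ) by rw [Real.rpow_one],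
            ← Real.rpow_add hs]
          norm_num [Real.rpow_neg_one]
        have e2 : ENNReal.ofReal s⁻¹ = 2 * ENNReal.ofReal r⁻¹ := by
          rw [hsdef, show (r/2)⁻¹ = 2 * r⁻¹ by field_simp, ENNReal.ofReal_mul (by norm_num)]
          norm_num
        calc 2 * (ENNReal.ofReal (s ^ (-2:ℝ)) * (3 * vB * ENNReal.ofReal s)) +
              2 * (3 * vB * ENNReal.ofReal s⁻¹)
            = 6 * vB * (ENNReal.ofReal (s ^ (-2:ℝ)) * ENNReal.ofReal s) +
              6 * vB * ENNReal.ofReal s⁻¹ := by ring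
          _ = 12 * vB * ENNReal.ofReal s⁻¹ := by rw [e1]; ring
          _ = 24 * vB * ENNReal.ofReal r⁻¹ := by rw [e2]; ring


/-- If `|Û(ξ)| ≤ M_U e^{−|ξ|}|ξ|^{−2}` and `|V̂(ξ)| ≤ M_V e^{−|ξ|}|ξ|^{−2}`, then
`|(Û ∗ V̂)(ξ)| ≤ c M_U M_V e^{−|ξ|} / |ξ|` for an absolute constant `c`. -/
theorem convolution_pm2_estimate :
    ∃ c > 0, ∀ (hatU hatV : EuclideanSpace ℝ (Fin 3) → ℂ) (MU MV : ℝ),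
      (∀ ξ : EuclideanSpace ℝ (Fin 3), ξ ≠ 0 →
        ‖hatU ξ‖ ≤ MU * Real.exp (-‖ξ‖) * ‖ξ‖ ^ (-2 : ℝ)) →
      (∀ ξ : EuclideanSpace ℝ (Fin 3), ξ ≠ 0 →
        ‖hatV ξ‖ ≤ MV * Real.exp (-‖ξ‖) * ‖ξ‖ ^ (-2 : ℝ)) →
      ∀ ξ : EuclideanSpace ℝ (Fin 3), ξ ≠ 0 →
        ‖∫ η, hatU (ξ - η) * hatV η‖ ≤ c * MU * MV * Real.exp (-‖ξ‖) / ‖ξ‖ := by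
  have hvfin : volume (ball (0:E3) 1) ≠ ⊤ := measure_ball_lt_top.ne
  have hvpos : 0 < volume (ball (0:E3) 1) := measure_ball_pos _ _ one_pos
  set vBr := (volume (ball (0:E3) 1)).toReal with hvBr
  have hvBrpos : 0 < vBr := ENNReal.toReal_pos hvpos.ne' hvfin
  refine ⟨24 * vBr, by positivity, ?_⟩
  intro hatU hatV MU MV hU hV ξ hξ
  -- MU, MV are nonnegative
  have hMnn : ∀ (f : E3 → ℂ) (M : ℝ),
      (∀ ζ : E3, ζ ≠ 0 → ‖f ζ‖ ≤ M * Real.exp (-‖ζ‖) * ‖ζ‖ ^ (-2:ℝ)) → 0 ≤ M := by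
    intro f M hf
    set e : E3 := EuclideanSpace.single (0 : Fin 3) (1:ℝ) with he
    have hne : ‖e‖ = 1 := by rw [he, EuclideanSpace.norm_single]; norm_num
    have he0 : e ≠ 0 := by intro h; rw [h, norm_zero] at hne; norm_num at hne
    have := hf e he0
    rw [hne] at this
    have h1 : (1:ℝ) ^ (-2:ℝ) = 1 := Real.one_rpow _
    rw [h1, mul_one] at this
    nlinarith [norm_nonneg (f e), Real.exp_pos (-(1:ℝ))]
  have hMU : 0 ≤ MU := hMnn hatU MU hU
  have hMV : 0 ≤ MV := hMnn hatV MV hV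
  set r := ‖ξ‖ with hrdef
  have hr : 0 < r := norm_pos_iff.mpr hξ
  -- a.e. pointwise bound
  have hae : ∀ᵐ η : E3, ENNReal.ofReal ‖hatU (ξ - η) * hatV η‖ ≤
      ENNReal.ofReal (MU * MV * Real.exp (-r)) *
        (ENNReal.ofReal (‖ξ - η‖ ^ (-2:ℝ)) * ENNReal.ofReal (‖η‖ ^ (-2:ℝ))) := by
    have h0 : ∀ᵐ η : E3, η ∉ ({0} : Set E3) :=
      Set.Countable.ae_notMem (Set.countable_singleton _) volume
    have hx : ∀ᵐ η : E3, η ∉ ({ξ} : Set E3) :=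
      Set.Countable.ae_notMem (Set.countable_singleton _) volume
    filter_upwards [h0, hx] with η hη0 hηξ
    rw [Set.mem_singleton_iff] at hη0 hηξ
    have hsub : ξ - η ≠ 0 := sub_ne_zero.mpr (Ne.symm hηξ)
    have h1 := hU (ξ - η) hsub
    have h2 := hV η hη0
    have hexp : Real.exp (-‖ξ - η‖) * Real.exp (-‖η‖) ≤ Real.exp (-r) := by
      rw [← Real.exp_add]
      apply Real.exp_le_exp.mpr
      have : r ≤ ‖ξ - η‖ + ‖η‖ := by
        calc r = ‖(ξ - η) + η‖ := by rw [sub_add_cancel]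
          _ ≤ ‖ξ - η‖ + ‖η‖ := norm_add_le _ _
      linarith
    have hA : (0:ℝ) ≤ ‖ξ - η‖ ^ (-2:ℝ) := Real.rpow_nonneg (norm_nonneg _) _
    have hB : (0:ℝ) ≤ ‖η‖ ^ (-2:ℝ) := Real.rpow_nonneg (norm_nonneg _) _
    have hreal : ‖hatU (ξ - η) * hatV η‖ ≤
        (MU * MV * Real.exp (-r)) * (‖ξ - η‖ ^ (-2:ℝ) * ‖η‖ ^ (-2:ℝ)) := by
      rw [norm_mul]
      calc ‖hatU (ξ - η)‖ * ‖hatV η‖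
          ≤ (MU * Real.exp (-‖ξ - η‖) * ‖ξ - η‖ ^ (-2:ℝ)) *
            (MV * Real.exp (-‖η‖) * ‖η‖ ^ (-2:ℝ)) := by
            apply mul_le_mul h1 h2 (norm_nonneg _)
            positivity
        _ = (MU * MV) * (Real.exp (-‖ξ - η‖) * Real.exp (-‖η‖)) *
            (‖ξ - η‖ ^ (-2:ℝ) * ‖η‖ ^ (-2:ℝ)) := by ring
        _ ≤ (MU * MV) * Real.exp (-r) * (‖ξ - η‖ ^ (-2:ℝ) * ‖η‖ ^ (-2:ℝ)) := by
            gcongr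
        _ = (MU * MV * Real.exp (-r)) * (‖ξ - η‖ ^ (-2:ℝ) * ‖η‖ ^ (-2:ℝ)) := by ring
    calc ENNReal.ofReal ‖hatU (ξ - η) * hatV η‖
        ≤ ENNReal.ofReal ((MU * MV * Real.exp (-r)) * (‖ξ - η‖ ^ (-2:ℝ) * ‖η‖ ^ (-2:ℝ))) :=
          ENNReal.ofReal_le_ofReal hreal
      _ = ENNReal.ofReal (MU * MV * Real.exp (-r)) *
            (ENNReal.ofReal (‖ξ - η‖ ^ (-2:ℝ)) * ENNReal.ofReal (‖η‖ ^ (-2:ℝ))) := by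
          rw [ENNReal.ofReal_mul (by positivity), ENNReal.ofReal_mul hA]
  -- the main lintegral bound
  have hkey : ∫⁻ η : E3, ENNReal.ofReal ‖hatU (ξ - η) * hatV η‖ ≤
      ENNReal.ofReal (24 * vBr * MU * MV * Real.exp (-r) / r) := by
    calc ∫⁻ η : E3, ENNReal.ofReal ‖hatU (ξ - η) * hatV η‖
        ≤ ∫⁻ η : E3, ENNReal.ofReal (MU * MV * Real.exp (-r)) *
            (ENNReal.ofReal (‖ξ - η‖ ^ (-2:ℝ)) * ENNReal.ofReal (‖η‖ ^ (-2:ℝ))) :=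
          lintegral_mono_ae hae
      _ = ENNReal.ofReal (MU * MV * Real.exp (-r)) *
            ∫⁻ η : E3, ENNReal.ofReal (‖ξ - η‖ ^ (-2:ℝ)) * ENNReal.ofReal (‖η‖ ^ (-2:ℝ)) :=
          lintegral_const_mul' _ _ ENNReal.ofReal_ne_top
      _ ≤ ENNReal.ofReal (MU * MV * Real.exp (-r)) *
            (24 * volume (ball (0:E3) 1) * ENNReal.ofReal r⁻¹) := by
          exact mul_le_mul_right (lint_G ξ hξ) _
      _ = ENNReal.ofReal (24 * vBr * MU * MV * Real.exp (-r) / r) := by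
          rw [show (volume (ball (0:E3) 1)) = ENNReal.ofReal vBr from
            (ENNReal.ofReal_toReal hvfin).symm]
          rw [show (24 : ℝ≥0∞) = ENNReal.ofReal (24:ℝ) by norm_num]
          rw [← ENNReal.ofReal_mul (by norm_num), ← ENNReal.ofReal_mul (by positivity),
            ← ENNReal.ofReal_mul (by positivity)]
          congr 1
          field_simp
  calc ‖∫ η, hatU (ξ - η) * hatV η‖
      ≤ (∫⁻ η : E3, ENNReal.ofReal ‖hatU (ξ - η) * hatV η‖).toReal :=
        norm_integral_le_lintegral_norm _
    _ ≤ (ENNReal.ofReal (24 * vBr * MU * MV * Real.exp (-r) / r)).toReal :=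
        ENNReal.toReal_mono ENNReal.ofReal_ne_top hkey
    _ = 24 * vBr * MU * MV * Real.exp (-r) / r := ENNReal.toReal_ofReal (by positivity)

end Aux
end

section
/- Let A = { U ∈ PM² : e^{√(−Δ)} U ∈ PM² } with norm ‖U‖_A = ‖e^{√(−Δ)} U‖_{PM²} = sup_{ξ≠0} |ξ|² e^{|ξ|} |Û(ξ)|. For divergence-free U, V ∈ A, the bilinear form B(U,V) = (1/ν) P (Δ^{−1} div(U ⊗ V)) satisfies ‖B(U,V)‖_A ≤ (c/ν) ‖U‖_A ‖V‖_A for an absolute constant c > 0. -/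
open MeasureTheory

noncomputable section

/-- Convolution of two scalar functions on `ℝ³`. -/
def convC (f g : EuclideanSpace ℝ (Fin 3) → ℂ) (ξ : EuclideanSpace ℝ (Fin 3)) : ℂ :=
  ∫ η, f (ξ - η) * g η

/-- Fourier symbol of `div(U ⊗ V)`: the `j`-th component is `i Σ_k ξ_k (Û_j ∗ V̂_k)(ξ)`. -/
def divTensorFourier (hatU hatV : EuclideanSpace ℝ (Fin 3) → EuclideanSpace ℂ (Fin 3))
    (ξ : EuclideanSpace ℝ (Fin 3)) (j : Fin 3) : ℂ :=
  Complex.I * ∑ k : Fin 3, (ξ k : ℂ) * convC (fun ζ => hatU ζ j) (fun ζ => hatV ζ k) ξ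

/-- Fourier symbol of the Leray projector `P`: `(Pv)^(ξ)_j = v̂_j − ξ_j (ξ·v̂)/|ξ|²`. -/
def lerayFourier (v : EuclideanSpace ℝ (Fin 3) → Fin 3 → ℂ)
    (ξ : EuclideanSpace ℝ (Fin 3)) (j : Fin 3) : ℂ :=
  v ξ j - ((ξ j : ℂ) / ((‖ξ‖ ^ 2 : ℝ) : ℂ)) * ∑ k : Fin 3, (ξ k : ℂ) * v ξ k

namespace BilinearAux

open Metric Set
local notation "E3" => EuclideanSpace ℝ (Fin 3)

lemma coord_le {𝕜 : Type*} [RCLike 𝕜] (x : EuclideanSpace 𝕜 (Fin 3)) (j : Fin 3) :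
    ‖x j‖ ≤ ‖x‖ := by
  rw [EuclideanSpace.norm_eq, Real.le_sqrt (norm_nonneg _)]
  · exact Finset.single_le_sum (f := fun i => ‖x i‖ ^ 2) (fun i _ => sq_nonneg _)
      (Finset.mem_univ j)
  · exact Finset.sum_nonneg fun i _ => sq_nonneg _

lemma my_finrank : Module.finrank ℝ (EuclideanSpace ℝ (Fin 3)) = 3 := by
  simp [finrank_euclideanSpace]

lemma ball_int {R : ℝ} (hR : 0 < R) :
    IntegrableOn (fun ζ : E3 => (‖ζ‖ ^ 2)⁻¹) (ball 0 R) := by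
  constructor
  · exact (((measurable_norm.pow_const 2).inv).aestronglyMeasurable)
  · rw [hasFiniteIntegral_iff_ofReal (Filter.Eventually.of_forall fun x => by positivity)]
    set μ := volume.restrict (ball (0:E3) R) with hμ
    rw [lintegral_eq_lintegral_meas_le (f := fun a : E3 => (‖a‖ ^ 2)⁻¹) μ
      (Filter.Eventually.of_forall fun x => by positivity)
      ((measurable_norm.pow_const 2).inv.aemeasurable)]
    have hmeas : ∀ t : ℝ, t ∈ Set.Ioi (0:ℝ) → μ {a : E3 | t ≤ (‖a‖ ^ 2)⁻¹}
        ≤ min (volume (ball (0:E3) R))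
          (ENNReal.ofReal ((Real.sqrt t⁻¹) ^ 3) * volume (ball (0:E3) 1)) := by
      intro t ht
      have ht : (0:ℝ) < t := ht
      refine le_min ?_ ?_
      · calc μ {a : E3 | t ≤ (‖a‖ ^ 2)⁻¹} ≤ μ univ := measure_mono (subset_univ _)
          _ = volume (ball (0:E3) R) := by rw [hμ, Measure.restrict_apply_univ]
      · calc μ {a : E3 | t ≤ (‖a‖ ^ 2)⁻¹}
            ≤ volume {a : E3 | t ≤ (‖a‖ ^ 2)⁻¹} := Measure.restrict_le_self _
          _ ≤ volume (closedBall (0:E3) (Real.sqrt t⁻¹)) := by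
              apply measure_mono
              intro a ha
              simp only [mem_setOf_eq] at ha
              rw [mem_closedBall_zero_iff]
              have h2 : ‖a‖ ^ 2 ≤ t⁻¹ := by
                rcases eq_or_lt_of_le (norm_nonneg a) with h0 | h0
                · rw [← h0]; norm_num; positivity
                · have hp : (0:ℝ) < ‖a‖ ^ 2 := by positivity
                  rwa [le_inv_comm₀ ht hp] at ha
              calc ‖a‖ = Real.sqrt (‖a‖ ^ 2) := (Real.sqrt_sq (norm_nonneg a)).symm
                _ ≤ Real.sqrt t⁻¹ := Real.sqrt_le_sqrt h2
          _ = ENNReal.ofReal ((Real.sqrt t⁻¹) ^ 3) * volume (ball (0:E3) 1) := by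
              rw [Measure.addHaar_closedBall _ _ (Real.sqrt_nonneg _), my_finrank]
    calc ∫⁻ t in Set.Ioi (0:ℝ), μ {a : E3 | t ≤ (‖a‖ ^ 2)⁻¹}
        ≤ ∫⁻ t in Set.Ioi (0:ℝ), min (volume (ball (0:E3) R))
            (ENNReal.ofReal ((Real.sqrt t⁻¹) ^ 3) * volume (ball (0:E3) 1)) :=
          setLIntegral_mono' measurableSet_Ioi hmeas
      _ ≤ (∫⁻ t in Set.Ioc (0:ℝ) 1, volume (ball (0:E3) R)) +
          ∫⁻ t in Set.Ioi (1:ℝ),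
            ENNReal.ofReal ((Real.sqrt t⁻¹) ^ 3) * volume (ball (0:E3) 1) := by
          rw [show Set.Ioi (0:ℝ) = Set.Ioc 0 1 ∪ Set.Ioi 1 from (Set.Ioc_union_Ioi_eq_Ioi zero_le_one).symm]
          refine le_trans (lintegral_union_le _ _ _) ?_
          gcongr
          · exact min_le_left _ _
          · exact min_le_right _ _
      _ < ⊤ := by
          refine ENNReal.add_lt_top.2 ⟨?_, ?_⟩
          · rw [setLIntegral_const]
            exact ENNReal.mul_lt_top measure_ball_lt_top (by simp)
          · rw [lintegral_mul_const' _ _ measure_ball_lt_top.ne]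
            refine ENNReal.mul_lt_top ?_ measure_ball_lt_top
            have heq : ∀ t ∈ Set.Ioi (1:ℝ),
                ENNReal.ofReal ((Real.sqrt t⁻¹) ^ 3) = ENNReal.ofReal (t ^ (-(3/2) : ℝ)) := by
              intro t ht
              have ht1 : (0:ℝ) < t := lt_trans zero_lt_one ht
              congr 1
              rw [show (Real.sqrt t⁻¹) = t ^ (-(1/2) : ℝ) by
                rw [Real.sqrt_eq_rpow, Real.inv_rpow ht1.le, ← Real.rpow_neg ht1.le]]
              rw [← Real.rpow_natCast (t ^ (-(1/2):ℝ)) 3, ← Real.rpow_mul ht1.le]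
              norm_num
            rw [setLIntegral_congr_fun measurableSet_Ioi heq]
            exact (integrableOn_Ioi_rpow_of_lt (by norm_num) zero_lt_one).setLIntegral_lt_top

lemma g_meas (u : E3) : Measurable (fun ζ : E3 => (‖u - ζ‖ ^ 2)⁻¹ * (‖ζ‖ ^ 2)⁻¹) :=
  (((measurable_const.sub measurable_id).norm.pow_const 2).inv).mul
    ((measurable_norm.pow_const 2).inv)

lemma ball_int_tr (u : E3) {R : ℝ} (hR : 0 < R) :
    IntegrableOn (fun ζ : E3 => (‖u - ζ‖ ^ 2)⁻¹) (ball u R) ∧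
    ∫ ζ in ball u R, (‖u - ζ‖ ^ 2)⁻¹ = ∫ w in ball (0:E3) R, (‖w‖ ^ 2)⁻¹ := by
  have hbase : Integrable ((ball (0:E3) R).indicator (fun w => (‖w‖ ^ 2)⁻¹)) :=
    (integrable_indicator_iff measurableSet_ball).2 (ball_int hR)
  have hcomp := hbase.comp_sub_right u
  have hfun : (fun ζ : E3 => (ball (0:E3) R).indicator (fun w => (‖w‖ ^ 2)⁻¹) (ζ - u)) =
      (ball u R).indicator (fun ζ : E3 => (‖u - ζ‖ ^ 2)⁻¹) := by
    funext ζ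
    by_cases h : ζ ∈ ball u R
    · have h' : ζ - u ∈ ball (0:E3) R := by
        rw [mem_ball_zero_iff]; rw [mem_ball_iff_norm] at h; exact h
      rw [indicator_of_mem h, indicator_of_mem h', norm_sub_rev]
    · have h' : ζ - u ∉ ball (0:E3) R := by
        rw [mem_ball_zero_iff]; rw [mem_ball_iff_norm] at h; exact h
      rw [indicator_of_notMem h, indicator_of_notMem h']
  rw [hfun] at hcomp
  constructor
  · exact (integrable_indicator_iff measurableSet_ball).1 hcomp
  · rw [← integral_indicator measurableSet_ball, ← integral_indicator measurableSet_ball,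
      ← hfun, integral_sub_right_eq_self]

lemma unit_bound : ∃ C₀ > 0, ∀ u : E3, ‖u‖ = 1 →
    Integrable (fun ζ : E3 => (‖u - ζ‖ ^ 2)⁻¹ * (‖ζ‖ ^ 2)⁻¹) ∧
    ∫ ζ, (‖u - ζ‖ ^ 2)⁻¹ * (‖ζ‖ ^ 2)⁻¹ ≤ C₀ := by
  set c₁ : ℝ := ∫ w in ball (0:E3) (1/2), 4 * (‖w‖ ^ 2)⁻¹ with hc₁
  set c₂ : ℝ := ∫ w in ball (0:E3) 2, 4 * (‖w‖ ^ 2)⁻¹ with hc₂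
  set c₃ : ℝ := ∫ w : E3, 21 * (1 + ‖w‖) ^ (-(4:ℝ)) with hc₃
  have h1 : 0 ≤ c₁ := integral_nonneg fun w => by positivity
  have h2 : 0 ≤ c₂ := integral_nonneg fun w => by positivity
  have h3 : 0 ≤ c₃ := integral_nonneg fun w => by positivity
  refine ⟨c₁ + c₂ + c₃ + 1, by linarith, ?_⟩
  intro u hu
  set g := fun ζ : E3 => (‖u - ζ‖ ^ 2)⁻¹ * (‖ζ‖ ^ 2)⁻¹ with hg
  have hgnn : ∀ ζ, 0 ≤ g ζ := fun ζ => by positivity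
  set S₁ := ball u (1/2) with hS₁
  set S₂ := ball (0:E3) 2 \ S₁ with hS₂
  have hsub : S₁ ⊆ ball (0:E3) 2 := by
    intro ζ hζ
    rw [mem_ball_iff_norm] at hζ
    rw [mem_ball_zero_iff]
    calc ‖ζ‖ = ‖u - (u - ζ)‖ := by rw [sub_sub_cancel]
      _ ≤ ‖u‖ + ‖u - ζ‖ := norm_sub_le _ _
      _ < 2 := by rw [hu, norm_sub_rev]; linarith
  have hb1 : ∀ ζ ∈ S₁, g ζ ≤ 4 * (‖u - ζ‖ ^ 2)⁻¹ := by
    intro ζ hζ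
    rw [mem_ball_iff_norm] at hζ
    have hn : (1:ℝ)/2 ≤ ‖ζ‖ := by
      have := norm_sub_norm_le u ζ
      rw [hu] at this
      rw [norm_sub_rev] at hζ
      linarith
    have hle : (‖ζ‖ ^ 2)⁻¹ ≤ 4 := by
      rw [show (4:ℝ) = ((1/2:ℝ)^2)⁻¹ by norm_num]
      gcongr
    calc g ζ ≤ (‖u - ζ‖ ^ 2)⁻¹ * 4 :=
          mul_le_mul_of_nonneg_left hle (by positivity)
      _ = 4 * (‖u - ζ‖ ^ 2)⁻¹ := mul_comm _ _
  have hb2 : ∀ ζ ∈ S₂, g ζ ≤ 4 * (‖ζ‖ ^ 2)⁻¹ := by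
    intro ζ hζ
    have hζ' : ¬ ζ ∈ S₁ := hζ.2
    rw [hS₁, mem_ball_iff_norm, not_lt, norm_sub_rev] at hζ'
    have hle : (‖u - ζ‖ ^ 2)⁻¹ ≤ 4 := by
      rw [show (4:ℝ) = ((1/2:ℝ)^2)⁻¹ by norm_num]
      gcongr
    exact mul_le_mul_of_nonneg_right hle (by positivity)
  have hb3 : ∀ ζ ∈ (ball (0:E3) 2)ᶜ, g ζ ≤ 21 * (1 + ‖ζ‖) ^ (-(4:ℝ)) := by
    intro ζ hζ
    rw [mem_compl_iff, mem_ball_zero_iff, not_lt] at hζ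
    have hζ0 : (0:ℝ) < ‖ζ‖ := by linarith
    have hd : ‖ζ‖ / 2 ≤ ‖u - ζ‖ := by
      have := norm_sub_norm_le ζ u
      rw [hu, norm_sub_rev] at this
      linarith
    have h14 : (1 + ‖ζ‖) ^ (-(4:ℝ)) = ((1 + ‖ζ‖) ^ (4:ℕ))⁻¹ := by
      rw [Real.rpow_neg (by positivity)]
      congr 1
      rw [← Real.rpow_natCast (1 + ‖ζ‖) 4]
      norm_num
    rw [h14]
    have key : (1 + ‖ζ‖) ^ (4:ℕ) * g ζ ≤ 21 := by
      have h1' : 1 + ‖ζ‖ ≤ (3/2) * ‖ζ‖ := by linarith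
      have hgle : g ζ ≤ ((‖ζ‖/2) ^ 2)⁻¹ * (‖ζ‖^2)⁻¹ := by
        rw [hg]
        have hA : (‖u - ζ‖ ^ 2)⁻¹ ≤ ((‖ζ‖/2) ^ 2)⁻¹ := by
          gcongr
        exact mul_le_mul_of_nonneg_right hA (by positivity)
      calc (1 + ‖ζ‖) ^ (4:ℕ) * g ζ
          ≤ ((3/2) * ‖ζ‖) ^ (4:ℕ) * (((‖ζ‖/2) ^ 2)⁻¹ * (‖ζ‖^2)⁻¹) := by
            apply mul_le_mul _ hgle (hgnn ζ) (by positivity)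
            gcongr
        _ = (3/2)^4 * 4 * (‖ζ‖^4 * (‖ζ‖^4)⁻¹) := by
            field_simp
            ring
        _ = (3/2)^4 * 4 := by rw [mul_inv_cancel₀ (by positivity), mul_one]
        _ ≤ 21 := by norm_num
    calc g ζ = ((1 + ‖ζ‖) ^ (4:ℕ))⁻¹ * ((1 + ‖ζ‖) ^ (4:ℕ) * g ζ) := by
          rw [← mul_assoc, inv_mul_cancel₀ (by positivity), one_mul]
      _ ≤ ((1 + ‖ζ‖) ^ (4:ℕ))⁻¹ * 21 :=
          mul_le_mul_of_nonneg_left key (by positivity)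
      _ = 21 * ((1 + ‖ζ‖) ^ (4:ℕ))⁻¹ := mul_comm _ _
  -- integrable majorants
  have hM1 : IntegrableOn (fun ζ : E3 => 4 * (‖u - ζ‖ ^ 2)⁻¹) S₁ :=
    ((ball_int_tr u (by norm_num)).1.const_mul 4)
  have hM2 : IntegrableOn (fun ζ : E3 => 4 * (‖ζ‖ ^ 2)⁻¹) (ball (0:E3) 2) :=
    ((ball_int (by norm_num)).const_mul 4)
  have hM2' : IntegrableOn (fun ζ : E3 => 4 * (‖ζ‖ ^ 2)⁻¹) S₂ :=
    hM2.mono_set diff_subset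
  have hM3 : Integrable (fun ζ : E3 => 21 * (1 + ‖ζ‖) ^ (-(4:ℝ))) := by
    apply Integrable.const_mul
    apply integrable_one_add_norm
    rw [finrank_euclideanSpace]
    norm_num
  -- integrability of g on the pieces
  have hgS1 : IntegrableOn g S₁ := by
    apply Integrable.mono' hM1 ((g_meas u).aestronglyMeasurable.restrict)
    filter_upwards [ae_restrict_mem measurableSet_ball] with ζ hζ
    rw [Real.norm_of_nonneg (hgnn ζ)]
    exact hb1 ζ hζ
  have hgS2 : IntegrableOn g S₂ := by
    apply Integrable.mono' hM2' ((g_meas u).aestronglyMeasurable.restrict)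
    filter_upwards [ae_restrict_mem (measurableSet_ball.diff measurableSet_ball)] with ζ hζ
    rw [Real.norm_of_nonneg (hgnn ζ)]
    exact hb2 ζ hζ
  have hgB : IntegrableOn g (ball (0:E3) 2) := by
    rw [← union_diff_cancel hsub]
    exact hgS1.union hgS2
  have hgS3 : IntegrableOn g (ball (0:E3) 2)ᶜ := by
    apply Integrable.mono' hM3.integrableOn ((g_meas u).aestronglyMeasurable.restrict)
    filter_upwards [ae_restrict_mem measurableSet_ball.compl] with ζ hζ
    rw [Real.norm_of_nonneg (hgnn ζ)]
    exact hb3 ζ hζ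
  have hgInt : Integrable g := by
    rw [← integrableOn_univ, ← union_compl_self (ball (0:E3) 2)]
    exact hgB.union hgS3
  refine ⟨hgInt, ?_⟩
  have hsplit : ∫ ζ, g ζ = (∫ ζ in S₁, g ζ) + (∫ ζ in S₂, g ζ) + ∫ ζ in (ball (0:E3) 2)ᶜ, g ζ := by
    rw [← setIntegral_union (disjoint_sdiff_self_right) (measurableSet_ball.diff measurableSet_ball)
      hgS1 hgS2, union_diff_cancel hsub,
      ← setIntegral_union disjoint_compl_right measurableSet_ball.compl hgB hgS3,
      union_compl_self, setIntegral_univ]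
  rw [hsplit]
  have e1 : ∫ ζ in S₁, g ζ ≤ c₁ := by
    calc ∫ ζ in S₁, g ζ ≤ ∫ ζ in S₁, 4 * (‖u - ζ‖ ^ 2)⁻¹ :=
        setIntegral_mono_on hgS1 hM1 measurableSet_ball hb1
      _ = c₁ := by
        rw [hc₁, integral_const_mul, integral_const_mul, (ball_int_tr u (by norm_num : (0:ℝ) < 1/2)).2]
  have e2 : ∫ ζ in S₂, g ζ ≤ c₂ := by
    calc ∫ ζ in S₂, g ζ ≤ ∫ ζ in S₂, 4 * (‖ζ‖ ^ 2)⁻¹ :=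
        setIntegral_mono_on hgS2 hM2' (measurableSet_ball.diff measurableSet_ball) hb2
      _ ≤ c₂ := setIntegral_mono_set hM2
          (Filter.Eventually.of_forall fun ζ => by positivity)
          (HasSubset.Subset.eventuallyLE diff_subset)
  have e3 : ∫ ζ in (ball (0:E3) 2)ᶜ, g ζ ≤ c₃ := by
    calc ∫ ζ in (ball (0:E3) 2)ᶜ, g ζ ≤ ∫ ζ in (ball (0:E3) 2)ᶜ, 21 * (1 + ‖ζ‖) ^ (-(4:ℝ)) :=
        setIntegral_mono_on hgS3 hM3.integrableOn measurableSet_ball.compl hb3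
      _ ≤ c₃ := setIntegral_le_integral hM3
          (Filter.Eventually.of_forall fun ζ => by positivity)
  linarith

lemma key_bound : ∃ C > 0, ∀ ξ : E3, ξ ≠ 0 →
    Integrable (fun η : E3 => (‖ξ - η‖ ^ 2)⁻¹ * (‖η‖ ^ 2)⁻¹) ∧
    ∫ η, (‖ξ - η‖ ^ 2)⁻¹ * (‖η‖ ^ 2)⁻¹ ≤ C / ‖ξ‖ := by
  obtain ⟨C₀, hC₀, hC⟩ := unit_bound
  refine ⟨C₀, hC₀, ?_⟩
  intro ξ hξ
  set r := ‖ξ‖ with hr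
  have hr0 : 0 < r := norm_pos_iff.2 hξ
  set u : E3 := r⁻¹ • ξ with hu'
  have hu : ‖u‖ = 1 := by
    rw [hu', norm_smul, norm_inv, norm_norm, ← hr, inv_mul_cancel₀ hr0.ne']
  have hru : r • u = ξ := by
    rw [hu', smul_smul, mul_inv_cancel₀ hr0.ne', one_smul]
  obtain ⟨hgInt, hgLe⟩ := hC u hu
  set f := fun η : E3 => (‖ξ - η‖ ^ 2)⁻¹ * (‖η‖ ^ 2)⁻¹ with hf
  have hcomp : (fun ζ : E3 => f (r • ζ)) =
      fun ζ : E3 => (r ^ 4)⁻¹ * ((‖u - ζ‖ ^ 2)⁻¹ * (‖ζ‖ ^ 2)⁻¹) := by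
    funext ζ
    rw [hf]
    have h1 : ξ - r • ζ = r • (u - ζ) := by rw [smul_sub, hru]
    have h2 : ‖r • (u - ζ)‖ = r * ‖u - ζ‖ := by
      rw [norm_smul, Real.norm_of_nonneg hr0.le]
    have h3 : ‖r • ζ‖ = r * ‖ζ‖ := by
      rw [norm_smul, Real.norm_of_nonneg hr0.le]
    simp only [h1, h2, h3]
    field_simp
  have hint : Integrable f := by
    rw [← integrable_comp_smul_iff volume f hr0.ne']
    rw [hcomp]
    exact hgInt.const_mul _
  refine ⟨hint, ?_⟩
  have hscal := Measure.integral_comp_smul volume f r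
  rw [hcomp] at hscal
  rw [integral_const_mul] at hscal
  rw [finrank_euclideanSpace, Fintype.card_fin] at hscal
  have habs : |((r ^ 3)⁻¹)| = (r^3)⁻¹ := abs_of_nonneg (by positivity)
  rw [habs, smul_eq_mul] at hscal
  -- hscal : (r^4)⁻¹ * ∫ g = (r^3)⁻¹ * ∫ f
  set G := ∫ ζ, (‖u - ζ‖ ^ 2)⁻¹ * (‖ζ‖ ^ 2)⁻¹ with hG
  set F := ∫ η, f η with hF
  have h5 : (r:ℝ)^3 * (r^3)⁻¹ = 1 := mul_inv_cancel₀ (by positivity)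
  have this1 : F = r⁻¹ * G := by
    calc F = r^3 * ((r^3)⁻¹ * F) := by rw [← mul_assoc, h5, one_mul]
      _ = r^3 * ((r^4)⁻¹ * G) := by rw [← hscal]
      _ = r⁻¹ * G := by
          field_simp
  rw [this1, div_eq_inv_mul]
  exact mul_le_mul_of_nonneg_left hgLe (by positivity)

lemma conv_bound : ∃ C > 0, ∀ (f g : E3 → ℂ) (Nf Ng : ℝ), 0 ≤ Nf → 0 ≤ Ng →
    (∀ ζ : E3, ζ ≠ 0 → ‖f ζ‖ ≤ Nf * ((‖ζ‖ ^ 2)⁻¹ * Real.exp (-‖ζ‖))) →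
    (∀ ζ : E3, ζ ≠ 0 → ‖g ζ‖ ≤ Ng * ((‖ζ‖ ^ 2)⁻¹ * Real.exp (-‖ζ‖))) →
    ∀ ξ : E3, ξ ≠ 0 →
      ‖convC f g ξ‖ ≤ C * (Nf * Ng) * Real.exp (-‖ξ‖) / ‖ξ‖ := by
  obtain ⟨C, hC0, hK⟩ := key_bound
  refine ⟨C, hC0, ?_⟩
  intro f g Nf Ng hNf hNg hf hg ξ hξ
  have hξ0 : (0:ℝ) < ‖ξ‖ := norm_pos_iff.2 hξ
  by_cases hI : Integrable (fun η : E3 => f (ξ - η) * g η)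
  swap
  · rw [convC, integral_undef hI, norm_zero]
    positivity
  obtain ⟨hKint, hKle⟩ := hK ξ hξ
  have hbound : ∀ᵐ η : E3,
      (fun η => ‖f (ξ - η) * g η‖) η ≤
      (fun η => (Nf * Ng * Real.exp (-‖ξ‖)) * ((‖ξ - η‖ ^ 2)⁻¹ * (‖η‖ ^ 2)⁻¹)) η := by
    have hnull : volume ({0, ξ} : Set E3) = 0 :=
      Set.Finite.measure_zero (Set.toFinite _) _
    filter_upwards [measure_eq_zero_iff_ae_notMem.1 hnull] with η hη
    simp only [Set.mem_insert_iff, Set.mem_singleton_iff, not_or] at hη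
    obtain ⟨hη0, hηξ⟩ := hη
    have hsub : ξ - η ≠ 0 := sub_ne_zero.2 (fun h => hηξ h.symm)
    have h1 := hf (ξ - η) hsub
    have h2 := hg η hη0
    calc ‖f (ξ - η) * g η‖ = ‖f (ξ - η)‖ * ‖g η‖ := norm_mul _ _
      _ ≤ (Nf * ((‖ξ - η‖ ^ 2)⁻¹ * Real.exp (-‖ξ - η‖))) *
          (Ng * ((‖η‖ ^ 2)⁻¹ * Real.exp (-‖η‖))) :=
        mul_le_mul h1 h2 (norm_nonneg _) (le_trans (norm_nonneg _) h1)
      _ = (Nf * Ng * (Real.exp (-‖ξ - η‖) * Real.exp (-‖η‖))) *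
          ((‖ξ - η‖ ^ 2)⁻¹ * (‖η‖ ^ 2)⁻¹) := by ring
      _ ≤ (Nf * Ng * Real.exp (-‖ξ‖)) * ((‖ξ - η‖ ^ 2)⁻¹ * (‖η‖ ^ 2)⁻¹) := by
        apply mul_le_mul_of_nonneg_right _ (by positivity)
        apply mul_le_mul_of_nonneg_left _ (by positivity)
        rw [← Real.exp_add]
        apply Real.exp_le_exp.2
        have htri : ‖ξ‖ ≤ ‖ξ - η‖ + ‖η‖ := by
          calc ‖ξ‖ = ‖(ξ - η) + η‖ := by rw [sub_add_cancel]
            _ ≤ ‖ξ - η‖ + ‖η‖ := norm_add_le _ _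
        linarith
  calc ‖convC f g ξ‖ ≤ ∫ η, ‖f (ξ - η) * g η‖ := norm_integral_le_integral_norm _
    _ ≤ ∫ η, (Nf * Ng * Real.exp (-‖ξ‖)) * ((‖ξ - η‖ ^ 2)⁻¹ * (‖η‖ ^ 2)⁻¹) :=
      integral_mono_ae hI.norm (hKint.const_mul _) hbound
    _ = (Nf * Ng * Real.exp (-‖ξ‖)) * ∫ η, (‖ξ - η‖ ^ 2)⁻¹ * (‖η‖ ^ 2)⁻¹ :=
      integral_const_mul _ _
    _ ≤ (Nf * Ng * Real.exp (-‖ξ‖)) * (C / ‖ξ‖) :=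
      mul_le_mul_of_nonneg_left hKle (by positivity)
    _ = C * (Nf * Ng) * Real.exp (-‖ξ‖) / ‖ξ‖ := by ring

end BilinearAux

open BilinearAux in
/-- Bilinear estimate in `A = {U ∈ PM² : e^{√−Δ}U ∈ PM²}`: for divergence-free `U, V ∈ A`,
`‖(1/ν) P Δ^{−1} div(U⊗V)‖_A ≤ (c/ν) ‖U‖_A ‖V‖_A`, stated on the Fourier side. -/
theorem bilinear_estimate_A :
    ∃ c > 0, ∀ (ν : ℝ), 0 < ν →
      ∀ (hatU hatV : EuclideanSpace ℝ (Fin 3) → EuclideanSpace ℂ (Fin 3)) (NU NV : ℝ),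
      (∀ ξ : EuclideanSpace ℝ (Fin 3), ∑ k : Fin 3, (ξ k : ℂ) * hatU ξ k = 0) →
      (∀ ξ : EuclideanSpace ℝ (Fin 3), ∑ k : Fin 3, (ξ k : ℂ) * hatV ξ k = 0) →
      (∀ ξ : EuclideanSpace ℝ (Fin 3), ξ ≠ 0 →
        ‖ξ‖ ^ 2 * Real.exp ‖ξ‖ * ‖hatU ξ‖ ≤ NU) →
      (∀ ξ : EuclideanSpace ℝ (Fin 3), ξ ≠ 0 →
        ‖ξ‖ ^ 2 * Real.exp ‖ξ‖ * ‖hatV ξ‖ ≤ NV) →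
      ∀ ξ : EuclideanSpace ℝ (Fin 3), ξ ≠ 0 → ∀ j : Fin 3,
        ‖ξ‖ ^ 2 * Real.exp ‖ξ‖ *
          ‖((ν⁻¹ : ℝ) : ℂ) * ((-(‖ξ‖ ^ 2)⁻¹ : ℝ) : ℂ) *
            lerayFourier (divTensorFourier hatU hatV) ξ j‖ ≤ (c / ν) * NU * NV := by
  obtain ⟨C, hC0, hconv⟩ := conv_bound
  refine ⟨12 * C, by positivity, ?_⟩
  intro ν hν hatU hatV NU NV _ _ hU hV ξ hξ j
  obtain ⟨x0, hx0⟩ := exists_ne (0 : EuclideanSpace ℝ (Fin 3))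
  have hNU : 0 ≤ NU := le_trans (by positivity) (hU x0 hx0)
  have hNV : 0 ≤ NV := le_trans (by positivity) (hV x0 hx0)
  have hξ0 : (0:ℝ) < ‖ξ‖ := norm_pos_iff.2 hξ
  -- componentwise decay bounds
  have hcomp : ∀ (W : EuclideanSpace ℝ (Fin 3) → EuclideanSpace ℂ (Fin 3)) (N : ℝ),
      (∀ ζ : EuclideanSpace ℝ (Fin 3), ζ ≠ 0 → ‖ζ‖ ^ 2 * Real.exp ‖ζ‖ * ‖W ζ‖ ≤ N) →
      ∀ (a : Fin 3) (ζ : EuclideanSpace ℝ (Fin 3)), ζ ≠ 0 →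
        ‖W ζ a‖ ≤ N * ((‖ζ‖ ^ 2)⁻¹ * Real.exp (-‖ζ‖)) := by
    intro W N hW a ζ hζ
    have hζ0 : (0:ℝ) < ‖ζ‖ := norm_pos_iff.2 hζ
    have hpos : (0:ℝ) < ‖ζ‖ ^ 2 * Real.exp ‖ζ‖ := by positivity
    have h2 : ‖W ζ‖ ≤ N / (‖ζ‖ ^ 2 * Real.exp ‖ζ‖) := by
      rw [le_div_iff₀ hpos]
      calc ‖W ζ‖ * (‖ζ‖ ^ 2 * Real.exp ‖ζ‖) = ‖ζ‖ ^ 2 * Real.exp ‖ζ‖ * ‖W ζ‖ := by ring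
        _ ≤ N := hW ζ hζ
    calc ‖W ζ a‖ ≤ ‖W ζ‖ := coord_le _ _
      _ ≤ N / (‖ζ‖ ^ 2 * Real.exp ‖ζ‖) := h2
      _ = N * ((‖ζ‖ ^ 2)⁻¹ * Real.exp (-‖ζ‖)) := by
        rw [Real.exp_neg, div_eq_mul_inv, mul_inv]
  have hconvQ : ∀ a b : Fin 3,
      ‖convC (fun ζ => hatU ζ a) (fun ζ => hatV ζ b) ξ‖ ≤
        C * (NU * NV) * Real.exp (-‖ξ‖) / ‖ξ‖ :=
    fun a b => hconv _ _ NU NV hNU hNV (hcomp hatU NU hU a) (hcomp hatV NV hV b) ξ hξ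
  set Q : ℝ := C * (NU * NV) * Real.exp (-‖ξ‖) / ‖ξ‖ with hQdef
  have hQ0 : 0 ≤ Q := by positivity
  have hcoordR : ∀ k : Fin 3, ‖(ξ k : ℂ)‖ ≤ ‖ξ‖ := by
    intro k
    rw [Complex.norm_real]
    exact coord_le (𝕜 := ℝ) ξ k
  have hdiv : ∀ a : Fin 3, ‖divTensorFourier hatU hatV ξ a‖ ≤ 3 * (‖ξ‖ * Q) := by
    intro a
    rw [divTensorFourier, norm_mul, Complex.norm_I, one_mul]
    calc ‖∑ k : Fin 3, (ξ k : ℂ) * convC (fun ζ => hatU ζ a) (fun ζ => hatV ζ k) ξ‖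
        ≤ ∑ k : Fin 3, ‖(ξ k : ℂ) * convC (fun ζ => hatU ζ a) (fun ζ => hatV ζ k) ξ‖ :=
          norm_sum_le _ _
      _ ≤ ∑ _k : Fin 3, ‖ξ‖ * Q := by
          apply Finset.sum_le_sum
          intro k _
          rw [norm_mul]
          exact mul_le_mul (hcoordR k) (hconvQ a k) (norm_nonneg _) hξ0.le
      _ = 3 * (‖ξ‖ * Q) := by
          rw [Finset.sum_const, Finset.card_univ, Fintype.card_fin]
          push_cast
          ring
  have hsum : ‖∑ k : Fin 3, (ξ k : ℂ) * divTensorFourier hatU hatV ξ k‖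
      ≤ 9 * (‖ξ‖ ^ 2 * Q) := by
    calc ‖∑ k : Fin 3, (ξ k : ℂ) * divTensorFourier hatU hatV ξ k‖
        ≤ ∑ k : Fin 3, ‖(ξ k : ℂ) * divTensorFourier hatU hatV ξ k‖ := norm_sum_le _ _
      _ ≤ ∑ _k : Fin 3, ‖ξ‖ * (3 * (‖ξ‖ * Q)) := by
          apply Finset.sum_le_sum
          intro k _
          rw [norm_mul]
          exact mul_le_mul (hcoordR k) (hdiv k) (norm_nonneg _) hξ0.le
      _ = 9 * (‖ξ‖ ^ 2 * Q) := by
          rw [Finset.sum_const, Finset.card_univ, Fintype.card_fin]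
          push_cast
          ring
  have hfrac : ‖((ξ j : ℂ) / ((‖ξ‖ ^ 2 : ℝ) : ℂ))‖ ≤ ‖ξ‖⁻¹ := by
    rw [norm_div, Complex.norm_real, Complex.norm_real,
      Real.norm_of_nonneg (by positivity : (0:ℝ) ≤ ‖ξ‖ ^ 2)]
    rw [div_le_iff₀ (by positivity)]
    calc ‖ξ j‖ ≤ ‖ξ‖ := coord_le (𝕜 := ℝ) ξ j
      _ = ‖ξ‖⁻¹ * ‖ξ‖ ^ 2 := by field_simp
  have hler : ‖lerayFourier (divTensorFourier hatU hatV) ξ j‖ ≤ 12 * (‖ξ‖ * Q) := by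
    rw [lerayFourier]
    calc ‖divTensorFourier hatU hatV ξ j - ((ξ j : ℂ) / ((‖ξ‖ ^ 2 : ℝ) : ℂ)) *
          ∑ k : Fin 3, (ξ k : ℂ) * divTensorFourier hatU hatV ξ k‖
        ≤ ‖divTensorFourier hatU hatV ξ j‖ + ‖((ξ j : ℂ) / ((‖ξ‖ ^ 2 : ℝ) : ℂ)) *
          ∑ k : Fin 3, (ξ k : ℂ) * divTensorFourier hatU hatV ξ k‖ := norm_sub_le _ _
      _ ≤ 3 * (‖ξ‖ * Q) + ‖ξ‖⁻¹ * (9 * (‖ξ‖ ^ 2 * Q)) := by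
          apply add_le_add (hdiv j)
          rw [norm_mul]
          exact mul_le_mul hfrac hsum (norm_nonneg _) (by positivity)
      _ = 12 * (‖ξ‖ * Q) := by field_simp; ring
  -- final assembly
  have hnorm1 : ‖((ν⁻¹ : ℝ) : ℂ)‖ = ν⁻¹ := by
    rw [Complex.norm_real, Real.norm_of_nonneg (by positivity)]
  have hnorm2 : ‖((-(‖ξ‖ ^ 2)⁻¹ : ℝ) : ℂ)‖ = (‖ξ‖ ^ 2)⁻¹ := by
    rw [Complex.norm_real, Real.norm_eq_abs, abs_neg, abs_of_nonneg (by positivity)]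
  rw [norm_mul, norm_mul, hnorm1, hnorm2]
  calc ‖ξ‖ ^ 2 * Real.exp ‖ξ‖ *
        (ν⁻¹ * (‖ξ‖ ^ 2)⁻¹ * ‖lerayFourier (divTensorFourier hatU hatV) ξ j‖)
      ≤ ‖ξ‖ ^ 2 * Real.exp ‖ξ‖ * (ν⁻¹ * (‖ξ‖ ^ 2)⁻¹ * (12 * (‖ξ‖ * Q))) := by
        apply mul_le_mul_of_nonneg_left _ (by positivity)
        apply mul_le_mul_of_nonneg_left hler (by positivity)
    _ = (12 * C / ν) * NU * NV := by
        rw [hQdef, Real.exp_neg]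
        have h1 : Real.exp ‖ξ‖ ≠ 0 := (Real.exp_pos _).ne'
        field_simp
end
end
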